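/- Let b be a connected locally finite weighted graph over V with values in an ordered field and let a ∈ V be a recurrent state for the random walk π = π_V^b. Then G(a) = ∞, where G(a) = lim_{n} 1/ρ(cap_{K_n}(a)/b(a)) along any exhaustion (K_n) of V. Equivalently, if G(a) < ∞ then a is transient. -/

import Mathlib

open Classical
open scoped ENNReal

namespace NAG

/-- The real part of an at most finite element of an ordered field:
the supremum of the rationals below it. -/
noncomputable def rp {K : Type*} [Field K] [LinearOrder K] [IsStrictOrderedRing K] (k : K) : ℝ :=
  sSup {r : ℝ | ∃ q : ℚ, r = (q : ℝ) ∧ (q : K) ≤ k}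

/-- `k₁ ≃ k₂` : the quotient is bounded above and below by positive rationals. -/
def Comparable {K : Type*} [Field K] [LinearOrder K] [IsStrictOrderedRing K] (k₁ k₂ : K) : Prop :=
  ∃ c₁ c₂ : ℚ, 0 < c₁ ∧ 0 < c₂ ∧ (c₁ : K) < k₁ / k₂ ∧ k₁ / k₂ < (c₂ : K)

/-- `k₁ ≺≺ k₂` : the quotient is smaller than every positive rational. -/
def MuchLT {K : Type*} [Field K] [LinearOrder K] [IsStrictOrderedRing K] (k₁ k₂ : K) : Prop :=
  ∀ c : ℚ, 0 < c → k₁ / k₂ < (c : K)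

/-- `k₁ ≾ k₂` : the quotient is bounded above by some positive rational. -/
def LessSim {K : Type*} [Field K] [LinearOrder K] [IsStrictOrderedRing K] (k₁ k₂ : K) : Prop :=
  ∃ c : ℚ, 0 < c ∧ k₁ / k₂ < (c : K)

/-- A (locally finite) weighted graph over `V` with values in an ordered field `K`. -/
structure Graph (V K : Type*) [Field K] [LinearOrder K] [IsStrictOrderedRing K] where
  w : V → V → K
  symm : ∀ x y, w x y = w y x
  nonneg : ∀ x y, 0 ≤ w x y
  loopless : ∀ x, w x x = 0
  locFin : ∀ x, {y | w x y ≠ 0}.Finite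

variable {V K : Type*} [Field K] [LinearOrder K] [IsStrictOrderedRing K]

/-- `b(x) = Σ_y b(x,y)`. -/
noncomputable def Graph.deg (G : Graph V K) (x : V) : K := ∑ᶠ y, G.w x y

def Graph.Adj (G : Graph V K) (x y : V) : Prop := 0 < G.w x y

def Graph.Connected (G : Graph V K) : Prop :=
  ∀ x y : V, ∃ (n : ℕ) (p : ℕ → V), p 0 = x ∧ p n = y ∧ ∀ i < n, G.Adj (p i) (p (i + 1))

def Graph.ConnectedOn (G : Graph V K) (S : Set V) : Prop :=
  ∀ x ∈ S, ∀ y ∈ S, ∃ (n : ℕ) (p : ℕ → V),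
    p 0 = x ∧ p n = y ∧ (∀ i ≤ n, p i ∈ S) ∧ ∀ i < n, G.Adj (p i) (p (i + 1))

/-- normalized weight `p(x,y) = b(x,y)/b(x)`. -/
noncomputable def Graph.p (G : Graph V K) (x y : V) : K := G.w x y / G.deg x

/-- The real transition matrix `π_U^b`. -/
noncomputable def Graph.pi (G : Graph V K) (U : Set V) (x y : V) : ℝ :=
  if x ∈ U then rp (G.p x y) else if x = y then 1 else 0

/-- A directed path of length `n` from `x` to `y` for a real kernel `m`. -/
def DirPath {V : Type*} (m : V → V → ℝ) (x y : V) (n : ℕ) (p : ℕ → V) : Prop :=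
  p 0 = x ∧ p n = y ∧ ∀ i < n, 0 < m (p i) (p (i + 1))

/-- `x → y` : reachability by directed paths. -/
def Reaches {V : Type*} (m : V → V → ℝ) (x y : V) : Prop :=
  x = y ∨ ∃ n p, DirPath m x y n p

/-- `x ↔ y` : mutual reachability (same strongly connected component). -/
def SameSCC {V : Type*} (m : V → V → ℝ) (x y : V) : Prop :=
  Reaches m x y ∧ Reaches m y x

/-- The Laplacian `Δf(x) = (1/b(x)) Σ_y b(x,y)(f(x) − f(y))`. -/
noncomputable def Graph.lap (G : Graph V K) (f : V → K) (x : V) : K :=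
  (∑ᶠ y, G.w x y * (f x - f y)) / G.deg x

/-- `v` solves the Dirichlet problem for the finite set `S` and `a ∈ S`. -/
def Graph.IsDirichletSol (G : Graph V K) (S : Finset V) (a : V) (v : V → K) : Prop :=
  v a = 1 ∧ (∀ x ∈ S, x ≠ a → G.lap v x = 0) ∧ ∀ x ∉ S, v x = 0

/-- `n`-step entries of a real kernel. -/
noncomputable def matpow {V : Type*} (m : V → V → ℝ) : ℕ → V → V → ℝ
  | 0 => fun x y => if x = y then 1 else 0
  | n + 1 => fun x y => ∑ᶠ z, matpow m n x z * m z y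


variable {G : Graph V K}

/-- `k` is finite: bounded between two rationals. -/
def Std (k : K) : Prop := (∃ q : ℚ, (q : K) ≤ k) ∧ (∃ q : ℚ, k ≤ (q : K))

lemma Std.of_bounds {k : K} {q₁ q₂ : ℚ} (h₁ : (q₁ : K) ≤ k) (h₂ : k ≤ (q₂ : K)) : Std k :=
  ⟨⟨q₁, h₁⟩, ⟨q₂, h₂⟩⟩

lemma std_set_nonempty {k : K} (h : Std k) :
    {r : ℝ | ∃ q : ℚ, r = (q : ℝ) ∧ (q : K) ≤ k}.Nonempty := by
  obtain ⟨⟨q, hq⟩, _⟩ := h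
  exact ⟨(q : ℝ), q, rfl, hq⟩

lemma std_set_bddAbove {k : K} (h : Std k) :
    BddAbove {r : ℝ | ∃ q : ℚ, r = (q : ℝ) ∧ (q : K) ≤ k} := by
  obtain ⟨_, ⟨q₂, hq₂⟩⟩ := h
  refine ⟨(q₂ : ℝ), fun r hr => ?_⟩
  obtain ⟨q, rfl, hq⟩ := hr
  have : (q : K) ≤ (q₂ : K) := le_trans hq hq₂
  exact_mod_cast (Rat.cast_le (K := K)).mp this

lemma rp_le_coe {k : K} (h : Std k) {q : ℚ} (hq : k ≤ (q : K)) : rp k ≤ (q : ℝ) := by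
  refine csSup_le (std_set_nonempty h) ?_
  rintro r ⟨q', rfl, hq'⟩
  have : (q' : K) ≤ (q : K) := le_trans hq' hq
  exact_mod_cast (Rat.cast_le (K := K)).mp this

lemma coe_le_rp {k : K} (h : Std k) {q : ℚ} (hq : (q : K) ≤ k) : (q : ℝ) ≤ rp k :=
  le_csSup (std_set_bddAbove h) ⟨q, rfl, hq⟩

lemma lt_of_rp_lt {k : K} (h : Std k) {q : ℚ} (hq : rp k < (q : ℝ)) : k < (q : K) := by
  by_contra hc
  exact absurd (coe_le_rp h (not_lt.mp hc)) (not_le.mpr hq)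

lemma exists_rat_le_of_lt_rp {k : K} (h : Std k) {r : ℝ} (hr : r < rp k) :
    ∃ q : ℚ, r < (q : ℝ) ∧ (q : K) ≤ k := by
  obtain ⟨x, hx, hrx⟩ := exists_lt_of_lt_csSup (std_set_nonempty h) hr
  obtain ⟨q, rfl, hq⟩ := hx
  exact ⟨q, hrx, hq⟩

@[simp] lemma rp_ratCast (q : ℚ) : rp ((q : K)) = (q : ℝ) := by
  have h : Std ((q : K)) := Std.of_bounds le_rfl le_rfl
  exact le_antisymm (rp_le_coe h le_rfl) (coe_le_rp h le_rfl)

lemma rp_zero : rp ((0 : K)) = 0 := by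
  have := rp_ratCast (K := K) 0; simpa using this

lemma rp_one : rp ((1 : K)) = 1 := by
  have := rp_ratCast (K := K) 1; simpa using this

lemma rp_nonneg {k : K} (h : Std k) (hk : 0 ≤ k) : 0 ≤ rp k := by
  have := coe_le_rp h (q := 0) (by simpa using hk)
  simpa using this

lemma rp_le_one {k : K} (h : Std k) (hk : k ≤ 1) : rp k ≤ 1 := by
  have := rp_le_coe h (q := 1) (by simpa using hk)
  simpa using this

lemma Std.add {k₁ k₂ : K} (h₁ : Std k₁) (h₂ : Std k₂) : Std (k₁ + k₂) := by
  obtain ⟨⟨a₁, ha₁⟩, ⟨b₁, hb₁⟩⟩ := h₁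
  obtain ⟨⟨a₂, ha₂⟩, ⟨b₂, hb₂⟩⟩ := h₂
  exact ⟨⟨a₁ + a₂, by push_cast; exact add_le_add ha₁ ha₂⟩,
    ⟨b₁ + b₂, by push_cast; exact add_le_add hb₁ hb₂⟩⟩

lemma rp_add {k₁ k₂ : K} (h₁ : Std k₁) (h₂ : Std k₂) :
    rp (k₁ + k₂) = rp k₁ + rp k₂ := by
  have h12 := h₁.add h₂
  apply le_antisymm
  · refine le_of_forall_pos_le_add fun ε hε => ?_
    obtain ⟨q₁, hq₁, hq₁'⟩ := exists_rat_btwn (show rp k₁ < rp k₁ + ε / 2 by linarith)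
    obtain ⟨q₂, hq₂, hq₂'⟩ := exists_rat_btwn (show rp k₂ < rp k₂ + ε / 2 by linarith)
    have hk₁ : k₁ < (q₁ : K) := lt_of_rp_lt h₁ hq₁
    have hk₂ : k₂ < (q₂ : K) := lt_of_rp_lt h₂ hq₂
    have : k₁ + k₂ ≤ ((q₁ + q₂ : ℚ) : K) := by push_cast; exact le_of_lt (add_lt_add hk₁ hk₂)
    have := rp_le_coe h12 this
    push_cast at this
    linarith
  · refine le_of_forall_pos_le_add fun ε hε => ?_
    obtain ⟨q₁, hq₁, hq₁'⟩ := exists_rat_le_of_lt_rp h₁ (show rp k₁ - ε / 2 < rp k₁ by linarith)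
    obtain ⟨q₂, hq₂, hq₂'⟩ := exists_rat_le_of_lt_rp h₂ (show rp k₂ - ε / 2 < rp k₂ by linarith)
    have : ((q₁ + q₂ : ℚ) : K) ≤ k₁ + k₂ := by push_cast; exact add_le_add hq₁' hq₂'
    have := coe_le_rp h12 this
    push_cast at this
    linarith

/-- rp is multiplicative on `[0,1]`-bounded elements. -/
lemma rp_mul_unit {k₁ k₂ : K} (h₁0 : 0 ≤ k₁) (h₁1 : k₁ ≤ 1) (h₂0 : 0 ≤ k₂) (h₂1 : k₂ ≤ 1) :
    rp (k₁ * k₂) = rp k₁ * rp k₂ := by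
  have one_bound : ((1:ℚ):K) = 1 := by norm_num
  have zero_bound : ((0:ℚ):K) = 0 := by norm_num
  have h₁ : Std k₁ := Std.of_bounds (q₁ := 0) (q₂ := 1) (by rw [zero_bound]; exact h₁0) (by rw [one_bound]; exact h₁1)
  have h₂ : Std k₂ := Std.of_bounds (q₁ := 0) (q₂ := 1) (by rw [zero_bound]; exact h₂0) (by rw [one_bound]; exact h₂1)
  have h12 : Std (k₁ * k₂) := Std.of_bounds (q₁ := 0) (q₂ := 1)
    (by rw [zero_bound]; exact mul_nonneg h₁0 h₂0)
    (by rw [one_bound]; exact mul_le_one₀ h₁1 h₂0 h₂1)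
  have r₁0 : 0 ≤ rp k₁ := rp_nonneg h₁ h₁0
  have r₂0 : 0 ≤ rp k₂ := rp_nonneg h₂ h₂0
  have r₁1 : rp k₁ ≤ 1 := rp_le_one h₁ h₁1
  have r₂1 : rp k₂ ≤ 1 := rp_le_one h₂ h₂1
  apply le_antisymm
  · refine le_of_forall_pos_le_add fun ε hε => ?_
    set δ : ℝ := min ε 1 with hδdef
    have hδpos : 0 < δ := lt_min hε one_pos
    have hδle : δ ≤ ε := min_le_left _ _
    have hδ1 : δ ≤ 1 := min_le_right _ _
    have hε3 : 0 < δ / 3 := by linarith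
    obtain ⟨q₁, hq₁, hq₁'⟩ := exists_rat_btwn (show rp k₁ < rp k₁ + δ/3 by linarith)
    obtain ⟨q₂, hq₂, hq₂'⟩ := exists_rat_btwn (show rp k₂ < rp k₂ + δ/3 by linarith)
    have hk₁ : k₁ < (q₁ : K) := lt_of_rp_lt h₁ hq₁
    have hk₂ : k₂ < (q₂ : K) := lt_of_rp_lt h₂ hq₂
    have hq₁pos : (0:ℝ) < q₁ := lt_of_le_of_lt r₁0 hq₁
    have hq₂pos : (0:ℝ) < q₂ := lt_of_le_of_lt r₂0 hq₂
    have hq₁posK : (0:K) < (q₁:K) := by exact_mod_cast (by exact_mod_cast hq₁pos : (0:ℚ) < q₁)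
    have : k₁ * k₂ ≤ ((q₁ * q₂ : ℚ) : K) := by
      push_cast
      exact mul_le_mul (le_of_lt hk₁) (le_of_lt hk₂) h₂0 (le_of_lt hq₁posK)
    have hle := rp_le_coe h12 this
    push_cast at hle
    have hq₁3 : (q₁:ℝ) ≤ rp k₁ + δ/3 := le_of_lt hq₁'
    have hq₂3 : (q₂:ℝ) ≤ rp k₂ + δ/3 := le_of_lt hq₂'
    nlinarith [mul_le_mul hq₁3 hq₂3 (le_of_lt hq₂pos) (by linarith : (0:ℝ) ≤ rp k₁ + δ/3)]
  · refine le_of_forall_pos_le_add fun ε hε => ?_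
    have hε3 : 0 < ε / 3 := by linarith
    obtain ⟨q₁, hq₁, hq₁'⟩ := exists_rat_le_of_lt_rp h₁ (show rp k₁ - ε/3 < rp k₁ by linarith)
    obtain ⟨q₂, hq₂, hq₂'⟩ := exists_rat_le_of_lt_rp h₂ (show rp k₂ - ε/3 < rp k₂ by linarith)
    set q₁' : ℚ := max q₁ 0 with hq₁def
    set q₂' : ℚ := max q₂ 0 with hq₂def
    have hq₁'K : ((q₁' : ℚ) : K) ≤ k₁ := by
      rw [hq₁def]; push_cast; exact max_le hq₁' (by rw [← zero_bound] at h₁0; exact_mod_cast h₁0)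
    have hq₂'K : ((q₂' : ℚ) : K) ≤ k₂ := by
      rw [hq₂def]; push_cast; exact max_le hq₂' (by rw [← zero_bound] at h₂0; exact_mod_cast h₂0)
    have hprod : ((q₁' * q₂' : ℚ) : K) ≤ k₁ * k₂ := by
      push_cast
      refine mul_le_mul hq₁'K hq₂'K ?_ h₁0
      · push_cast; positivity
    have hge := coe_le_rp h12 hprod
    push_cast at hge
    have h₁R : rp k₁ - ε/3 ≤ (q₁' : ℝ) := by
      rw [hq₁def]; push_cast; exact le_max_of_le_left (le_of_lt hq₁)
    have h₂R : rp k₂ - ε/3 ≤ (q₂' : ℝ) := by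
      rw [hq₂def]; push_cast; exact le_max_of_le_left (le_of_lt hq₂)
    have h₁'nn : (0:ℝ) ≤ (q₁':ℝ) := by rw [hq₁def]; push_cast; positivity
    have h₂'nn : (0:ℝ) ≤ (q₂':ℝ) := by rw [hq₂def]; push_cast; positivity
    have hrpnn : (0:ℝ) ≤ rp (k₁ * k₂) := le_trans (mul_nonneg h₁'nn h₂'nn) hge
    -- rp(k₁k₂) ≥ q₁'q₂' ≥ (rp k₁ - ε/3)(rp k₂ - ε/3) when both nonneg; else easy
    rcases le_or_gt (rp k₁) (ε/3) with hc | hc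
    · nlinarith
    rcases le_or_gt (rp k₂) (ε/3) with hc2 | hc2
    · nlinarith
    · have hA : (0:ℝ) ≤ rp k₁ - ε/3 := by linarith
      have hB : (0:ℝ) ≤ rp k₂ - ε/3 := by linarith
      nlinarith [mul_le_mul h₁R h₂R hB h₁'nn]

lemma Std.sum {ι : Type*} (F : Finset ι) (f : ι → K) (h : ∀ i ∈ F, Std (f i)) :
    Std (∑ i ∈ F, f i) := by
  classical
  induction F using Finset.induction_on with
  | empty => simpa using Std.of_bounds (q₁ := 0) (q₂ := 0) (by norm_num) (by norm_num)
  | insert a s hx ih =>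
    rw [Finset.sum_insert hx]
    exact (h a (Finset.mem_insert_self a s)).add (ih fun i hi => h i (Finset.mem_insert_of_mem hi))

lemma rp_sum {ι : Type*} (F : Finset ι) (f : ι → K) (h : ∀ i ∈ F, Std (f i)) :
    rp (∑ i ∈ F, f i) = ∑ i ∈ F, rp (f i) := by
  classical
  induction F using Finset.induction_on with
  | empty => simpa using rp_zero
  | insert a s hx ih =>
    rw [Finset.sum_insert hx, Finset.sum_insert hx,
      rp_add (h a (Finset.mem_insert_self a s)) (Std.sum s f fun i hi => h i (Finset.mem_insert_of_mem hi)),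
      ih fun i hi => h i (Finset.mem_insert_of_mem hi)]


/-! ### Basic graph lemmas -/

/-- The finite set of neighbours of `x`. -/
noncomputable def Graph.nb (G : Graph V K) (x : V) : Finset V := (G.locFin x).toFinset

lemma Graph.mem_nb {G : Graph V K} {x y : V} : y ∈ G.nb x ↔ G.w x y ≠ 0 :=
  Set.Finite.mem_toFinset _

lemma Graph.deg_eq_sum (G : Graph V K) (x : V) : G.deg x = ∑ y ∈ G.nb x, G.w x y := by
  refine finsum_eq_sum_of_support_subset _ ?_
  intro y hy
  simpa [Graph.nb, Set.Finite.coe_toFinset] using hy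

variable {G : Graph V K}

lemma Graph.p_nonneg (G : Graph V K) (hdeg : ∀ x, 0 < G.deg x) (x y : V) : 0 ≤ G.p x y :=
  div_nonneg (G.nonneg x y) (le_of_lt (hdeg x))

lemma Graph.w_le_deg (G : Graph V K) (x y : V) : G.w x y ≤ G.deg x := by
  rw [G.deg_eq_sum x]
  by_cases h : y ∈ G.nb x
  · exact Finset.single_le_sum (fun z _ => G.nonneg x z) h
  · rw [not_imp_comm.mp Graph.mem_nb.mpr h]
    exact Finset.sum_nonneg fun z _ => G.nonneg x z

lemma Graph.p_le_one (G : Graph V K) (hdeg : ∀ x, 0 < G.deg x) (x y : V) : G.p x y ≤ 1 :=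
  (div_le_one (hdeg x)).mpr (G.w_le_deg x y)

lemma Graph.sum_p (G : Graph V K) (hdeg : ∀ x, 0 < G.deg x) (x : V) :
    ∑ y ∈ G.nb x, G.p x y = 1 := by
  simp only [Graph.p, ← Finset.sum_div, ← G.deg_eq_sum x]
  exact div_self (ne_of_gt (hdeg x))

/-- For `x ∈ S`, `x ≠ a`: the Laplacian vanishing gives the mean value property. -/
lemma lap_zero_sum (hdeg : ∀ x, 0 < G.deg x) {v : V → K} {x : V}
    (h : G.lap v x = 0) : ∑ y ∈ G.nb x, G.w x y * (v x - v y) = 0 := by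
  have hnum : (∑ᶠ y, G.w x y * (v x - v y)) = 0 := by
    rcases div_eq_zero_iff.mp h with h' | h'
    · exact h'
    · exact absurd h' (ne_of_gt (hdeg x))
  rw [← hnum]
  refine (finsum_eq_sum_of_support_subset _ ?_).symm
  intro y hy
  have : G.w x y ≠ 0 := by
    intro h0
    apply hy
    simp [h0]
  simpa [Graph.nb, Set.Finite.coe_toFinset] using this

/-- Mean value as an identity for `v x`. -/
lemma harmonic_avg (hdeg : ∀ x, 0 < G.deg x) {v : V → K} {x : V}
    (h : G.lap v x = 0) : v x = ∑ y ∈ G.nb x, G.p x y * v y := by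
  have h0 := lap_zero_sum hdeg h
  have hsplit : ∑ y ∈ G.nb x, G.w x y * (v x - v y)
      = (∑ y ∈ G.nb x, G.w x y) * v x - ∑ y ∈ G.nb x, G.w x y * v y := by
    rw [Finset.sum_mul]
    rw [← Finset.sum_sub_distrib]
    congr 1; ext y; ring
  rw [hsplit, ← G.deg_eq_sum x, sub_eq_zero] at h0
  have : v x = (∑ y ∈ G.nb x, G.w x y * v y) / G.deg x := by
    rw [eq_div_iff (ne_of_gt (hdeg x)), mul_comm]
    exact h0
  rw [this, Finset.sum_div]
  congr 1; ext y
  rw [Graph.p, div_mul_eq_mul_div, mul_comm (G.w x y) (v y), mul_div_assoc, mul_comm]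

/-- Propagation of an extreme value along paths in `S` to `a` : contradiction if `c ≠ v a`. -/
lemma propagate_to_a {S : Finset V} {a : V} {v : V → K} (hS : G.ConnectedOn ↑S)
    (c : K) (hc : ∀ x ∈ S, x ≠ a → v x = c → ∀ y, G.Adj x y → v y = c)
    {x₀ : V} (hx₀S : x₀ ∈ S) (hx₀ : v x₀ = c) (haS : a ∈ S) (hca : v a ≠ c) : False := by
  obtain ⟨n, p, hp0, hpn, hpS, hpadj⟩ := hS x₀ (by exact_mod_cast hx₀S) a (by exact_mod_cast haS)
  have key : ∀ i, i ≤ n → v (p i) = c := by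
    intro i
    induction i with
    | zero => intro _; rw [hp0]; exact hx₀
    | succ j ih =>
      intro hj
      have hjn : j ≤ n := le_of_lt (Nat.lt_of_succ_le hj)
      have hvj : v (p j) = c := ih hjn
      have hpjS : p j ∈ S := by exact_mod_cast hpS j hjn
      have hpja : p j ≠ a := by
        intro h
        exact hca (h ▸ hvj)
      exact hc (p j) hpjS hpja hvj (p (j+1)) (hpadj j (Nat.lt_of_succ_le hj))
  exact hca (hpn ▸ key n le_rfl)

/-- Maximum principle bounds for Dirichlet solutions: `0 ≤ v ≤ 1`. -/
lemma dirichlet_bounds (hdeg : ∀ x, 0 < G.deg x) {S : Finset V} {a : V} {v : V → K}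
    (hS : G.ConnectedOn ↑S) (haS : a ∈ S) (hv : G.IsDirichletSol S a v) :
    ∀ x, 0 ≤ v x ∧ v x ≤ 1 := by
  obtain ⟨hva, hharm, hout⟩ := hv
  -- global max over S
  have hSne : S.Nonempty := ⟨a, haS⟩
  obtain ⟨xM, hxM, hMmax⟩ := S.exists_max_image v hSne
  obtain ⟨xm, hxm, hmmin⟩ := S.exists_min_image v hSne
  set M := v xM with hMdef
  set m := v xm with hmdef
  have hM1 : 1 ≤ M := hva ▸ hMmax a haS
  have hm1 : m ≤ 1 := hva ▸ hmmin a haS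
  have hMglob : ∀ y, v y ≤ M := by
    intro y
    by_cases hy : y ∈ S
    · exact hMmax y hy
    · rw [hout y hy]; linarith
  have hmglob : ∀ y, m ≤ v y ∨ 0 ≤ m := by
    intro y
    by_cases hy : y ∈ S
    · exact Or.inl (hmmin y hy)
    · rcases le_or_gt 0 m with h | h
      · exact Or.inr h
      · exact Or.inl (by rw [hout y hy]; linarith)
  -- max ≤ 1
  have hMle : M ≤ 1 := by
    by_contra hM
    push_neg at hM
    refine propagate_to_a hS M ?_ hxM hMdef.symm haS (by rw [hva]; exact ne_of_lt hM)
    intro x hxS hxa hvx y hAdj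
    have h0 := lap_zero_sum hdeg (hharm x hxS hxa)
    have hterms : ∀ z ∈ G.nb x, 0 ≤ G.w x z * (v x - v z) := by
      intro z _
      exact mul_nonneg (G.nonneg x z) (by rw [hvx]; linarith [hMglob z])
    have hz := (Finset.sum_eq_zero_iff_of_nonneg hterms).mp h0
    have hynb : y ∈ G.nb x := Graph.mem_nb.mpr (ne_of_gt hAdj)
    have := hz y hynb
    rcases mul_eq_zero.mp this with h' | h'
    · exact absurd h' (ne_of_gt hAdj)
    · rw [hvx] at h'
      linarith [sub_eq_zero.mp h']
  -- min ≥ 0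
  have hmge : 0 ≤ m := by
    by_contra hm
    push_neg at hm
    have hmglob' : ∀ y, m ≤ v y := by
      intro y
      rcases hmglob y with h | h
      · exact h
      · linarith
    refine propagate_to_a hS m ?_ hxm hmdef.symm haS (by rw [hva]; linarith)
    intro x hxS hxa hvx y hAdj
    have h0 := lap_zero_sum hdeg (hharm x hxS hxa)
    have h0' : ∑ z ∈ G.nb x, G.w x z * (v z - v x) = 0 := by
      rw [← neg_eq_zero, ← Finset.sum_neg_distrib]
      rw [← h0]
      congr 1; ext z; ring
    have hterms : ∀ z ∈ G.nb x, 0 ≤ G.w x z * (v z - v x) := by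
      intro z _
      exact mul_nonneg (G.nonneg x z) (by rw [hvx]; linarith [hmglob' z])
    have hz := (Finset.sum_eq_zero_iff_of_nonneg hterms).mp h0'
    have hynb : y ∈ G.nb x := Graph.mem_nb.mpr (ne_of_gt hAdj)
    have := hz y hynb
    rcases mul_eq_zero.mp this with h' | h'
    · exact absurd h' (ne_of_gt hAdj)
    · rw [hvx] at h'
      linarith [sub_eq_zero.mp h']
  intro x
  by_cases hx : x ∈ S
  · exact ⟨le_trans hmge (hmmin x hx), le_trans (hMmax x hx) hMle⟩
  · rw [hout x hx]; norm_num

/-! ### Transfer to the reals -/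

/-- The real one-step kernel. -/
noncomputable def Graph.rker (G : Graph V K) (x y : V) : ℝ := rp (G.p x y)

lemma Graph.pi_univ_eq (G : Graph V K) : G.pi Set.univ = G.rker := by
  funext x y
  simp [Graph.pi, Graph.rker]

lemma Std_p (hdeg : ∀ x, 0 < G.deg x) (x y : V) : Std (G.p x y) :=
  Std.of_bounds (q₁ := 0) (q₂ := 1) (by simpa using G.p_nonneg hdeg x y)
    (by simpa using G.p_le_one hdeg x y)

lemma rker_nonneg (hdeg : ∀ x, 0 < G.deg x) (x y : V) : 0 ≤ G.rker x y :=
  rp_nonneg (Std_p hdeg x y) (G.p_nonneg hdeg x y)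

lemma rker_supp (x y : V) (h : G.rker x y ≠ 0) : G.w x y ≠ 0 := by
  intro h0
  apply h
  have : G.p x y = 0 := by rw [Graph.p, h0, zero_div]
  rw [Graph.rker, this, rp_zero]

/-- rp of a sum `Σ p x y * v y` over the neighbours. -/
lemma rp_sum_pv (hdeg : ∀ x, 0 < G.deg x) {v : V → K} (hb : ∀ y, 0 ≤ v y ∧ v y ≤ 1) (x : V) :
    rp (∑ y ∈ G.nb x, G.p x y * v y) = ∑ y ∈ G.nb x, G.rker x y * rp (v y) := by
  rw [rp_sum _ _ (fun y _ => Std.of_bounds (q₁ := 0) (q₂ := 1)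
      (by simpa using mul_nonneg (G.p_nonneg hdeg x y) (hb y).1)
      (by simpa using mul_le_one₀ (G.p_le_one hdeg x y) (hb y).1 (hb y).2))]
  refine Finset.sum_congr rfl fun y _ => ?_
  exact rp_mul_unit (G.p_nonneg hdeg x y) (G.p_le_one hdeg x y) (hb y).1 (hb y).2

/-- `Σ_{y ∈ nb x} p x y * v y` is in `[0,1]` for `v ∈ [0,1]`. -/
lemma sum_pv_bounds (hdeg : ∀ x, 0 < G.deg x) {v : V → K} (hb : ∀ y, 0 ≤ v y ∧ v y ≤ 1) (x : V) :
    0 ≤ ∑ y ∈ G.nb x, G.p x y * v y ∧ (∑ y ∈ G.nb x, G.p x y * v y) ≤ 1 := by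
  constructor
  · exact Finset.sum_nonneg fun y _ => mul_nonneg (G.p_nonneg hdeg x y) (hb y).1
  · calc ∑ y ∈ G.nb x, G.p x y * v y ≤ ∑ y ∈ G.nb x, G.p x y := by
          refine Finset.sum_le_sum fun y _ => ?_
          nlinarith [(hb y).1, (hb y).2, G.p_nonneg hdeg x y]
      _ = 1 := G.sum_p hdeg x

/-- The Laplacian at `a` as one minus the p-average. -/
lemma lap_at_a (hdeg : ∀ x, 0 < G.deg x) {v : V → K} {a : V} (hva : v a = 1) :
    G.lap v a = 1 - ∑ y ∈ G.nb a, G.p a y * v y := by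
  have hnum : (∑ᶠ y, G.w a y * (v a - v y)) = ∑ y ∈ G.nb a, G.w a y * (v a - v y) := by
    refine finsum_eq_sum_of_support_subset _ ?_
    intro y hy
    have : G.w a y ≠ 0 := by intro h0; apply hy; simp [h0]
    simpa [Graph.nb, Set.Finite.coe_toFinset] using this
  rw [Graph.lap, hnum]
  have hsplit : ∑ y ∈ G.nb a, G.w a y * (v a - v y)
      = (∑ y ∈ G.nb a, G.w a y) - ∑ y ∈ G.nb a, G.w a y * v y := by
    rw [← Finset.sum_sub_distrib]
    refine Finset.sum_congr rfl fun y _ => ?_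
    rw [hva]; ring
  rw [hsplit, ← G.deg_eq_sum a, sub_div, div_self (ne_of_gt (hdeg a)), Finset.sum_div]
  congr 1
  refine Finset.sum_congr rfl fun y _ => ?_
  simp only [Graph.p]; ring

/-! ### Balls and matrix powers -/

/-- Finite "balls" around `a` containing supports of matrix powers. -/
noncomputable def Graph.ball (G : Graph V K) (a : V) : ℕ → Finset V
  | 0 => {a}
  | k + 1 => (G.ball a k) ∪ (G.ball a k).biUnion G.nb

lemma ball_subset_succ (a : V) (k : ℕ) : G.ball a k ⊆ G.ball a (k + 1) := by
  intro y hy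
  simp only [Graph.ball, Finset.mem_union]
  exact Or.inl hy

lemma ball_mono (a : V) {k l : ℕ} (h : k ≤ l) : G.ball a k ⊆ G.ball a l := by
  induction l with
  | zero => simpa [Nat.le_zero.mp h]
  | succ n ih =>
    rcases Nat.lt_or_ge k (n + 1) with h' | h'
    · exact (ih (Nat.lt_succ_iff.mp h')).trans (ball_subset_succ a n)
    · have : k = n + 1 := le_antisymm h h'
      subst this
      exact subset_rfl

lemma a_mem_ball (a : V) (k : ℕ) : a ∈ G.ball a k :=
  ball_mono a (Nat.zero_le k) (by simp [Graph.ball])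

lemma matpow_support {r : V → V → ℝ} (hr : ∀ z y, r z y ≠ 0 → G.w z y ≠ 0)
    {a : V} : ∀ (k : ℕ) (y : V), matpow r k a y ≠ 0 → y ∈ G.ball a k := by
  intro k
  induction k with
  | zero =>
    intro y hy
    simp only [matpow] at hy
    have : a = y := by by_contra h; simp [h] at hy
    simp [Graph.ball, ← this]
  | succ n ih =>
    intro y hy
    simp only [matpow] at hy
    by_contra hmem
    apply hy
    apply finsum_eq_zero_of_forall_eq_zero
    intro z
    by_cases h1 : matpow r n a z = 0
    · rw [h1, zero_mul]
    by_cases h2 : r z y = 0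
    · rw [h2, mul_zero]
    exfalso
    apply hmem
    have hz : z ∈ G.ball a n := ih z h1
    have hw : G.w z y ≠ 0 := hr z y h2
    simp only [Graph.ball, Finset.mem_union, Finset.mem_biUnion]
    exact Or.inr ⟨z, hz, Graph.mem_nb.mpr hw⟩

lemma matpow_succ_sum {r : V → V → ℝ} (hr : ∀ z y, r z y ≠ 0 → G.w z y ≠ 0) {a : V} (k : ℕ) (y : V) :
    matpow r (k + 1) a y = ∑ z ∈ G.ball a k, matpow r k a z * r z y := by
  show (∑ᶠ z, matpow r k a z * r z y) = _
  refine finsum_eq_sum_of_support_subset _ ?_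
  intro z hz
  have h1 : matpow r k a z ≠ 0 := by
    intro h; apply hz; simp [Function.mem_support, h, zero_mul]
  exact matpow_support hr k z h1

lemma matpow_nonneg {r : V → V → ℝ} (hr0 : ∀ z y, 0 ≤ r z y) (k : ℕ) (x y : V) : 0 ≤ matpow r k x y := by
  induction k generalizing x y with
  | zero => simp only [matpow]; positivity
  | succ n ih => exact finsum_nonneg fun z => mul_nonneg (ih x z) (hr0 z y)

/-- Two kernels that agree on a ball have the same matrix powers up to the radius. -/
lemma matpow_congr_ball {r r' : V → V → ℝ} (hr : ∀ z y, r z y ≠ 0 → G.w z y ≠ 0)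
    {a : V} {N : ℕ} (hagree : ∀ z ∈ G.ball a N, ∀ y, r z y = r' z y) :
    ∀ k ≤ N, ∀ y, matpow r k a y = matpow r' k a y := by
  intro k
  induction k with
  | zero => intro _ y; simp [matpow]
  | succ n ih =>
    intro hn y
    have hn' : n ≤ N := le_of_lt (Nat.lt_of_succ_le hn)
    show (∑ᶠ z, matpow r n a z * r z y) = (∑ᶠ z, matpow r' n a z * r' z y)
    refine finsum_congr fun z => ?_
    by_cases h1 : matpow r n a z = 0
    · rw [h1, zero_mul, ← ih hn' z, h1, zero_mul]
    · have hz : z ∈ G.ball a N := ball_mono a hn' (matpow_support hr n z h1)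
      rw [ih hn' z, hagree z hz y]

/-! ### Telescoping -/

/-- The key telescoping estimate. -/
lemma telescope {Q : V → V → ℝ} {u : V → ℝ} {a : V} {c : ℝ}
    (hQsupp : ∀ z y, Q z y ≠ 0 → G.w z y ≠ 0)
    (hQ0 : ∀ z y, 0 ≤ Q z y) (hu0 : ∀ y, 0 ≤ u y) (hua : u a = 1)
    (hQrow : ∀ x, ∑ y ∈ G.nb x, Q x y * u y = u x - (if x = a then c else 0)) :
    ∀ k : ℕ, c * ∑ j ∈ Finset.range k, matpow Q j a a ≤ 1 := by
  set T : ℕ → ℝ := fun k => ∑ y ∈ G.ball a k, matpow Q k a y * u y with hT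
  have hT0 : T 0 = 1 := by
    simp [hT, Graph.ball, matpow, hua]
  have hTnonneg : ∀ k, 0 ≤ T k := fun k =>
    Finset.sum_nonneg fun y _ => mul_nonneg (matpow_nonneg hQ0 k a y) (hu0 y)
  have hTsucc : ∀ k, T (k + 1) = T k - matpow Q k a a * c := by
    intro k
    have step1 : T (k + 1) = ∑ y ∈ G.ball a (k+1), (∑ z ∈ G.ball a k, matpow Q k a z * Q z y) * u y := by
      refine Finset.sum_congr rfl fun y _ => ?_
      rw [matpow_succ_sum hQsupp k y]
    rw [step1]
    have step2 : ∑ y ∈ G.ball a (k+1), (∑ z ∈ G.ball a k, matpow Q k a z * Q z y) * u y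
        = ∑ z ∈ G.ball a k, matpow Q k a z * ∑ y ∈ G.ball a (k+1), Q z y * u y := by
      simp only [Finset.sum_mul, Finset.mul_sum]
      rw [Finset.sum_comm]
      refine Finset.sum_congr rfl fun z _ => Finset.sum_congr rfl fun y _ => by ring
    rw [step2]
    have step3 : ∀ z ∈ G.ball a k, ∑ y ∈ G.ball a (k+1), Q z y * u y
        = u z - (if z = a then c else 0) := by
      intro z hz
      rw [← hQrow z]
      refine (Finset.sum_subset ?_ ?_).symm
      · intro y hy
        simp only [Graph.ball, Finset.mem_union, Finset.mem_biUnion]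
        exact Or.inr ⟨z, hz, hy⟩
      · intro y _ hy
        have : Q z y = 0 := by
          by_contra h
          exact hy (Graph.mem_nb.mpr (hQsupp z y h))
        rw [this, zero_mul]
    calc ∑ z ∈ G.ball a k, matpow Q k a z * ∑ y ∈ G.ball a (k+1), Q z y * u y
        = ∑ z ∈ G.ball a k, (matpow Q k a z * u z
            - (if z = a then matpow Q k a z * c else 0)) := by
          refine Finset.sum_congr rfl fun z hz => ?_
          rw [step3 z hz]
          by_cases h : z = a <;> simp [h] <;> ring
      _ = T k - matpow Q k a a * c := by
          rw [Finset.sum_sub_distrib, Finset.sum_ite_eq' (G.ball a k) a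
            (fun z => matpow Q k a z * c), if_pos (a_mem_ball a k)]
  -- closed form
  have hTform : ∀ k, T k = 1 - c * ∑ j ∈ Finset.range k, matpow Q j a a := by
    intro k
    induction k with
    | zero => simpa using hT0
    | succ n ih =>
      rw [hTsucc n, ih, Finset.sum_range_succ]
      ring
  intro k
  have := hTnonneg k
  rw [hTform k] at this
  linarith
/-! ### The row identity for Dirichlet solutions -/

/-- The killed kernel for a finite set `S`. -/
noncomputable def Qker (G : Graph V K) (S : Finset V) : V → V → ℝ :=
  fun x y => if x ∈ S then G.rker x y else 0

lemma Qker_supp (S : Finset V) (z y : V) (h : Qker G S z y ≠ 0) : G.w z y ≠ 0 := by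
  by_cases hz : z ∈ S
  · exact rker_supp z y (by simpa [Qker, hz] using h)
  · simp [Qker, hz] at h

lemma Qker_nonneg (hdeg : ∀ x, 0 < G.deg x) (S : Finset V) (z y : V) : 0 ≤ Qker G S z y := by
  by_cases hz : z ∈ S
  · simpa [Qker, hz] using rker_nonneg hdeg z y
  · simp [Qker, hz]

/-- The key estimate for one Dirichlet solution. -/
lemma dirichlet_key (hdeg : ∀ x, 0 < G.deg x) {S : Finset V} {a : V} {v : V → K}
    (hS : G.ConnectedOn ↑S) (haS : a ∈ S) (hv : G.IsDirichletSol S a v) :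
    ∀ k : ℕ, rp (G.lap v a) * ∑ j ∈ Finset.range k, matpow (Qker G S) j a a ≤ 1 := by
  have hb : ∀ y, 0 ≤ v y ∧ v y ≤ 1 := dirichlet_bounds hdeg hS haS hv
  have hStd : ∀ y, Std (v y) := fun y =>
    Std.of_bounds (q₁ := 0) (q₂ := 1) (by simpa using (hb y).1) (by simpa using (hb y).2)
  set u : V → ℝ := fun y => rp (v y) with hu
  have hu0 : ∀ y, 0 ≤ u y := fun y => rp_nonneg (hStd y) (hb y).1
  have hua : u a = 1 := by rw [hu]; simp only; rw [hv.1, rp_one]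
  -- the row identity
  have hQrow : ∀ x, ∑ y ∈ G.nb x, Qker G S x y * u y
      = u x - (if x = a then rp (G.lap v a) else 0) := by
    intro x
    by_cases hxS : x ∈ S
    · by_cases hxa : x = a
      · subst hxa
        simp only [Qker, if_pos hxS]
        have h1 : ∑ y ∈ G.nb x, G.rker x y * u y = rp (∑ y ∈ G.nb x, G.p x y * v y) :=
          (rp_sum_pv hdeg hb x).symm
        have hlap : G.lap v x = 1 - ∑ y ∈ G.nb x, G.p x y * v y := lap_at_a hdeg hv.1
        set t : K := ∑ y ∈ G.nb x, G.p x y * v y with ht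
        have htb := sum_pv_bounds hdeg hb x
        have hStd_t : Std t := Std.of_bounds (q₁ := 0) (q₂ := 1)
          (by simpa using htb.1) (by simpa using htb.2)
        have hStd_lap : Std (1 - t) := Std.of_bounds (q₁ := 0) (q₂ := 1)
          (by simpa using sub_nonneg.mpr htb.2) (by simpa using sub_le_self (1:K) htb.1)
        have hsum : rp ((1 - t) + t) = rp (1 - t) + rp t := rp_add hStd_lap hStd_t
        rw [sub_add_cancel, rp_one] at hsum
        rw [h1, hua, hlap]
        simp only [if_true, eq_self_iff_true, if_pos]
        linarith [hsum]
      · simp only [Qker, if_pos hxS, if_neg hxa, sub_zero]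
        have hharm := harmonic_avg hdeg (hv.2.1 x hxS hxa)
        have h1 : ∑ y ∈ G.nb x, G.rker x y * u y = rp (∑ y ∈ G.nb x, G.p x y * v y) :=
          (rp_sum_pv hdeg hb x).symm
        rw [h1, ← hharm]
    · have hxa : x ≠ a := fun h => hxS (h ▸ haS)
      simp only [Qker, if_neg hxS, if_neg hxa, zero_mul, Finset.sum_const_zero, sub_zero]
      rw [hu]
      simp only
      rw [hv.2.2 x hxS, rp_zero]
  exact telescope (Qker_supp S) (Qker_nonneg hdeg S) hu0 hua hQrow

/-- The estimate with the full (unkilled) kernel, when the ball fits in `S`. -/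
lemma dirichlet_key_full (hdeg : ∀ x, 0 < G.deg x) {S : Finset V} {a : V} {v : V → K}
    (hS : G.ConnectedOn ↑S) (haS : a ∈ S) (hv : G.IsDirichletSol S a v)
    {N : ℕ} (hball : G.ball a N ⊆ S) :
    rp (G.lap v a) * ∑ j ∈ Finset.range N, matpow (G.pi Set.univ) j a a ≤ 1 := by
  have hcongr := matpow_congr_ball (G := G) (r := Qker G S) (r' := G.rker)
    (Qker_supp S) (a := a) (N := N)
    (fun z hz y => by simp [Qker, if_pos (hball hz)])
  have : ∑ j ∈ Finset.range N, matpow (G.pi Set.univ) j a a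
      = ∑ j ∈ Finset.range N, matpow (Qker G S) j a a := by
    refine Finset.sum_congr rfl fun j hj => ?_
    rw [G.pi_univ_eq, hcongr j (le_of_lt (Finset.mem_range.mp hj)) a]
  rw [this]
  exact dirichlet_key hdeg hS haS hv N

/-- if `a` is a recurrent state for `π = π_V^b`, then
`G(a) = lim_n 1/ρ(cap_{K_n}(a)/b(a)) = ∞` along any exhaustion `(K_n)` of `V`
(equivalently, `G(a) < ∞` implies transience). -/
theorem recurrent_implies_G_infinite {V K : Type*} [Field K] [LinearOrder K] [IsStrictOrderedRing K] [Countable V]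
    (G : Graph V K) (hconn : G.Connected) (hdeg : ∀ x, 0 < G.deg x)
    (S : ℕ → Finset V) (hmono : ∀ n, S n ⊆ S (n + 1))
    (hconnS : ∀ n, G.ConnectedOn ↑(S n)) (hcover : ∀ x : V, ∃ n, x ∈ S n)
    (a : V) (ha : a ∈ S 0)
    (v : ℕ → V → K) (hv : ∀ n, G.IsDirichletSol (S n) a (v n))
    (hrec : ∑' n : ℕ, ENNReal.ofReal (matpow (G.pi Set.univ) n a a) = ⊤) :
    Filter.limsup
      (fun n => (ENNReal.ofReal (rp ((G.lap (v n) a * G.deg a) / G.deg a)))⁻¹)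
      Filter.atTop = ⊤ := by
  -- monotonicity of the exhaustion
  have hSmono : ∀ {m n : ℕ}, m ≤ n → S m ⊆ S n := by
    intro m n h
    induction n, h using Nat.le_induction with
    | base => exact subset_rfl
    | succ n _ ih => exact ih.trans (hmono n)
  have haS : ∀ n, a ∈ S n := fun n => hSmono (Nat.zero_le n) ha
  -- simplify the statement's expression
  have hsimp : ∀ n, (G.lap (v n) a * G.deg a) / G.deg a = G.lap (v n) a := fun n =>
    mul_div_cancel_right₀ _ (ne_of_gt (hdeg a))
  -- the real diagonal entries are nonnegative
  set g : ℕ → ℝ := fun j => matpow (G.pi Set.univ) j a a with hg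
  have hg0 : ∀ j, 0 ≤ g j := by
    intro j
    rw [hg, G.pi_univ_eq]
    exact matpow_nonneg (rker_nonneg hdeg) j a a
  -- partial sums are unbounded
  have hdiv : ∀ C : ℝ, ∃ N : ℕ, C < ∑ j ∈ Finset.range N, g j := by
    intro C
    by_contra hC
    push_neg at hC
    apply absurd hrec
    have hb : ∀ s : Finset ℕ, ∑ j ∈ s, ENNReal.ofReal (g j) ≤ ENNReal.ofReal C := by
      intro s
      obtain ⟨N, hN⟩ := s.exists_nat_subset_range
      calc ∑ j ∈ s, ENNReal.ofReal (g j) ≤ ∑ j ∈ Finset.range N, ENNReal.ofReal (g j) :=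
            Finset.sum_le_sum_of_subset hN
        _ = ENNReal.ofReal (∑ j ∈ Finset.range N, g j) :=
            (ENNReal.ofReal_sum_of_nonneg fun j _ => hg0 j).symm
        _ ≤ ENNReal.ofReal C := ENNReal.ofReal_le_ofReal (hC N)
    rw [ENNReal.tsum_eq_iSup_sum]
    exact ne_top_of_le_ne_top ENNReal.ofReal_ne_top (iSup_le hb)
  -- conclude
  refine ENNReal.eq_top_of_forall_nnreal_le fun r => ?_
  refine Filter.le_limsup_of_frequently_le' ?_
  rw [Filter.frequently_atTop]
  intro m
  set C : ℝ := max (r : ℝ) 1 with hC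
  have hCpos : 0 < C := lt_of_lt_of_le one_pos (le_max_right _ _)
  obtain ⟨N, hN⟩ := hdiv C
  -- choose n ≥ m with ball a N ⊆ S n
  set n : ℕ := max m ((G.ball a N).sup fun x => (hcover x).choose) with hn
  have hball : G.ball a N ⊆ S n := by
    intro x hx
    have h0 : ((G.ball a N).sup fun x => (hcover x).choose) ≤ n := le_max_right _ _
    have h1 : (hcover x).choose ≤ n :=
      le_trans (Finset.le_sup (f := fun x => (hcover x).choose) hx) h0
    exact hSmono h1 ((hcover x).choose_spec)
  refine ⟨n, le_max_left _ _, ?_⟩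
  -- the key estimate
  have hkey : rp (G.lap (v n) a) * ∑ j ∈ Finset.range N, g j ≤ 1 :=
    dirichlet_key_full hdeg (hconnS n) (haS n) (hv n) hball
  have hle : rp (G.lap (v n) a) ≤ 1 / C := by
    rcases le_or_gt (rp (G.lap (v n) a)) 0 with h | h
    · exact le_trans h (by positivity)
    · rw [le_div_iff₀ hCpos]
      calc rp (G.lap (v n) a) * C ≤ rp (G.lap (v n) a) * ∑ j ∈ Finset.range N, g j :=
            mul_le_mul_of_nonneg_left (le_of_lt hN) (le_of_lt h)
        _ ≤ 1 := hkey
  -- translate into ℝ≥0∞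
  rw [hsimp n]
  have h1 : ENNReal.ofReal (rp (G.lap (v n) a)) ≤ ENNReal.ofReal (1 / C) :=
    ENNReal.ofReal_le_ofReal hle
  have h2 : ENNReal.ofReal (1 / C) = (ENNReal.ofReal C)⁻¹ := by
    rw [one_div, ENNReal.ofReal_inv_of_pos hCpos]
  calc (r : ℝ≥0∞) = ENNReal.ofReal (r : ℝ) := (ENNReal.ofReal_coe_nnreal).symm
    _ ≤ ENNReal.ofReal C := ENNReal.ofReal_le_ofReal (le_max_left _ _)
    _ = ((ENNReal.ofReal C)⁻¹)⁻¹ := (inv_inv _).symm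
    _ ≤ (ENNReal.ofReal (rp (G.lap (v n) a)))⁻¹ := by
        rw [← h2]
        exact ENNReal.inv_le_inv' h1

end NAG
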